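/- Let w ∈ S_n with w ≠ w₀ and (i,j) an addable cell of dom(w) with j = α(w). The element w_{U,i} ∈ Φ̄_i(w) has a descent at position i if and only if w_{U,i} ≥ w s_i in Bruhat order, if and only if i+1 ∈ U. -/

import Mathlib

/-- Coxeter length of a permutation of `Fin n`: number of inversions. -/
def len {n : ℕ} (w : Equiv.Perm (Fin n)) : ℕ :=
  (Finset.univ.filter (fun p : Fin n × Fin n => p.1 < p.2 ∧ w p.2 < w p.1)).card

/-- The longest permutation `w₀` of `S_n` (reversal). -/
def longest (n : ℕ) : Equiv.Perm (Fin n) := Fin.revPerm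

/-- The simple transposition `s_i` (1-based index `i ∈ [n-1]`), exchanging
positions `i` and `i+1` of the one-line notation. -/
def simpleRefl (n i : ℕ) : Equiv.Perm (Fin n) :=
  if h : 1 ≤ i ∧ i < n then Equiv.swap ⟨i - 1, by omega⟩ ⟨i, by omega⟩ else 1

/-- The Hecke (Demazure) up-operator: `w * τ_i = w` if `ℓ(w s_i) < ℓ(w)`, else `w s_i`. -/
def heckeStar {n : ℕ} (w : Equiv.Perm (Fin n)) (i : ℕ) : Equiv.Perm (Fin n) :=
  if len (w * simpleRefl n i) < len w then w else w * simpleRefl n i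

/-- The down-operator: `w □ τ_i = w` if `ℓ(w s_i) > ℓ(w)`, else `w s_i`. -/
def heckeSq {n : ℕ} (w : Equiv.Perm (Fin n)) (i : ℕ) : Equiv.Perm (Fin n) :=
  if len w < len (w * simpleRefl n i) then w else w * simpleRefl n i

/-- The rank function of a permutation: `rk_w(a,b) = #{i ∈ [a] : w(i) ∈ [b]}`
(here encoded 0-based: positions `m` with `m < a` and values `w(m) < b`). -/
def rk {n : ℕ} (w : Equiv.Perm (Fin n)) (a b : ℕ) : ℕ :=
  (Finset.univ.filter (fun m : Fin n => (m : ℕ) < a ∧ (w m : ℕ) < b)).card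

/-- Bruhat order on `S_n`: the reflexive-transitive closure of the covering
relation `u ⋖ u t` with `t` a transposition and `ℓ(ut) = ℓ(u) + 1`. -/
def bruhatLE {n : ℕ} (u v : Equiv.Perm (Fin n)) : Prop :=
  Relation.ReflTransGen
    (fun x y => (∃ t : Equiv.Perm (Fin n), t.IsSwap ∧ y = x * t) ∧ len y = len x + 1) u v

/-- The value `w(i)` in 1-based one-line notation, for the permutation of
`{1, …, n}` determined by `w : Equiv.Perm (Fin n)` (extended by the identity
outside `[1,n]`, matching the embedding `S_n ↪ S_+`). -/
def act {n : ℕ} (w : Equiv.Perm (Fin n)) (i : ℕ) : ℕ :=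
  if h : 1 ≤ i ∧ i ≤ n then ((w ⟨i - 1, by omega⟩ : Fin n) : ℕ) + 1 else i

/-- The Rothe diagram `D(w) = {(i,j) : w(i) > j and w⁻¹(j) > i}`, 1-based. -/
def rd {n : ℕ} (w : Equiv.Perm (Fin n)) : Set (ℕ × ℕ) :=
  {p | 1 ≤ p.1 ∧ 1 ≤ p.2 ∧ p.2 < act w p.1 ∧ p.1 < act w⁻¹ p.2}

/-- The dominant part `dom(w)` of the Rothe diagram: the largest Young-diagram
shaped subset, i.e. cells whose whole upper-left rectangle lies in `D(w)`. -/
def domP {n : ℕ} (w : Equiv.Perm (Fin n)) : Set (ℕ × ℕ) :=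
  {p | 1 ≤ p.1 ∧ 1 ≤ p.2 ∧
    ∀ q : ℕ × ℕ, 1 ≤ q.1 → 1 ≤ q.2 → q.1 ≤ p.1 → q.2 ≤ p.2 → q ∈ rd w}

/-- `(i,j)` is an addable cell of `dom(w)`. -/
def addableP {n : ℕ} (w : Equiv.Perm (Fin n)) (i j : ℕ) : Prop :=
  1 ≤ i ∧ 1 ≤ j ∧ (i, j) ∉ domP w ∧
    (1 < i → (i - 1, j) ∈ domP w) ∧ (1 < j → (i, j - 1) ∈ domP w)

/-- `(i,j)` is an addable cell of `dom(w)` with `j = α(w)`, i.e. `i + j ≤ n` and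
`j` is the leftmost column containing an addable cell `(i',j')` with `i'+j' ≤ n`. -/
def alphaCell {n : ℕ} (w : Equiv.Perm (Fin n)) (i j : ℕ) : Prop :=
  addableP w i j ∧ i + j ≤ n ∧
    ∀ i' j', addableP w i' j' → i' + j' ≤ n → j ≤ j'

/-- `(a, w(a))` is a neighbor of `(i, w(i))` in the graph of `w` (1-based):
`i ≤ a`, `w(i) ≤ w(a)`, `(a, w(a)) ≠ (i, w(i))`, and no other point of the
graph of `w` lies in the rectangle `[i,a] × [w(i), w(a)]`. -/
def isNbrP {n : ℕ} (w : Equiv.Perm (Fin n)) (i a : ℕ) : Prop :=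
  i ≤ a ∧ act w i ≤ act w a ∧ (a, act w a) ≠ (i, act w i) ∧
    ∀ a', i ≤ a' → a' ≤ a → act w i ≤ act w a' → act w a' ≤ act w a →
      a' = i ∨ a' = a

/-- The transposition `t_{i,j}` of the 1-based positions `i, j ∈ [n]`. -/
def tpos (n i j : ℕ) : Equiv.Perm (Fin n) :=
  if h : 1 ≤ i ∧ i ≤ n ∧ 1 ≤ j ∧ j ≤ n then
    Equiv.swap ⟨i - 1, by omega⟩ ⟨j - 1, by omega⟩ else 1

/-- For `U = {i_1 < i_2 < ⋯ < i_k}` (1-based positions), the permutation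
`w_{U,i} = w t_{i,i_k} t_{i,i_{k-1}} ⋯ t_{i,i_1}` (and `w_{∅,i} = w`). -/
def wUp {n : ℕ} (w : Equiv.Perm (Fin n)) (i : ℕ) (U : Finset ℕ) :
    Equiv.Perm (Fin n) :=
  ((U.sort (· ≤ ·)).reverse).foldl (fun v j => v * tpos n i j) w


section ActLemmas

variable {n : ℕ}

lemma act_def_in (w : Equiv.Perm (Fin n)) {x : ℕ} (h1 : 1 ≤ x) (h2 : x ≤ n) :
    act w x = ((w ⟨x - 1, by omega⟩ : Fin n) : ℕ) + 1 := by
  simp [act, h1, h2]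

lemma act_def_out (w : Equiv.Perm (Fin n)) {x : ℕ} (h : ¬(1 ≤ x ∧ x ≤ n)) :
    act w x = x := by
  simp [act, h]

lemma act_mem (w : Equiv.Perm (Fin n)) {x : ℕ} (h1 : 1 ≤ x) (h2 : x ≤ n) :
    1 ≤ act w x ∧ act w x ≤ n := by
  rw [act_def_in w h1 h2]
  have := (w ⟨x - 1, by omega⟩).isLt
  omega

lemma act_mul (u v : Equiv.Perm (Fin n)) (x : ℕ) :
    act (u * v) x = act u (act v x) := by
  by_cases h : 1 ≤ x ∧ x ≤ n
  · have hv := act_mem v h.1 h.2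
    rw [act_def_in v h.1 h.2] at hv ⊢
    rw [act_def_in (u*v) h.1 h.2, act_def_in u (by omega) (by omega)]
    simp only [Equiv.Perm.mul_apply]
    have : (⟨(v ⟨x - 1, by omega⟩ : ℕ) + 1 - 1, by omega⟩ : Fin n) = v ⟨x - 1, by omega⟩ :=
      Fin.ext (by simp)
    rw [this]
  · rw [act_def_out v h, act_def_out (u*v) h, act_def_out u h]

lemma act_inj (w : Equiv.Perm (Fin n)) {x y : ℕ} (h : act w x = act w y) : x = y := by
  by_cases hx : 1 ≤ x ∧ x ≤ n <;> by_cases hy : 1 ≤ y ∧ y ≤ n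
  · rw [act_def_in w hx.1 hx.2, act_def_in w hy.1 hy.2] at h
    have : w ⟨x-1, by omega⟩ = w ⟨y-1, by omega⟩ := Fin.ext (by omega)
    have := w.injective this
    have := Fin.mk.injEq (x-1) (by omega : x-1 < n) (y-1) (by omega) ▸ this
    omega
  · have := act_mem w hx.1 hx.2
    rw [act_def_out w hy] at h; omega
  · have := act_mem w hy.1 hy.2
    rw [act_def_out w hx] at h; omega
  · rw [act_def_out w hx, act_def_out w hy] at h; exact h

lemma act_inv_act (w : Equiv.Perm (Fin n)) {x : ℕ} (h1 : 1 ≤ x) (h2 : x ≤ n) :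
    act w⁻¹ (act w x) = x := by
  have hm := act_mem w h1 h2
  rw [act_def_in w h1 h2] at hm ⊢
  rw [act_def_in w⁻¹ hm.1 hm.2]
  have : (⟨(w ⟨x-1, by omega⟩ : ℕ) + 1 - 1, by omega⟩ : Fin n) = w ⟨x-1, by omega⟩ :=
    Fin.ext (by simp)
  rw [this]
  simp
  omega

end ActLemmas

section LenSwap

variable {n : ℕ}

private lemma flip_region_mem (u v : Fin n) (huv : u < v) (p1 p2 : Fin n)
    (hp : p1 < p2) (hA : ¬(p1 = u ∧ u < p2 ∧ p2 ≤ v))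
    (hB : ¬(p2 = v ∧ u < p1 ∧ p1 < v)) :
    (Equiv.swap u v p1 < Equiv.swap u v p2) ∧
    ¬((Equiv.swap u v p1) = u ∧ u < Equiv.swap u v p2 ∧ Equiv.swap u v p2 ≤ v) ∧
    ¬((Equiv.swap u v p2) = v ∧ u < Equiv.swap u v p1 ∧ Equiv.swap u v p1 < v) := by
  rcases eq_or_ne p1 u with h1u | h1u
  · rcases eq_or_ne p2 v with h2v | h2v
    · exact absurd ⟨h1u, lt_of_le_of_lt (le_of_eq h1u.symm) hp, le_of_eq h2v⟩ hA
    · have h2u : p2 ≠ u := fun h => lt_irrefl u (by rw [h1u, h] at hp; exact hp)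
      have hv2 : v < p2 := by
        rcases lt_or_ge v p2 with h | h
        · exact h
        · exact absurd ⟨h1u, lt_of_le_of_lt (le_of_eq h1u.symm) hp, h⟩ hA
      rw [h1u, Equiv.swap_apply_left, Equiv.swap_apply_of_ne_of_ne h2u h2v]
      exact ⟨hv2, fun h => absurd h.1 (ne_of_gt huv), fun h => absurd h.1 h2v⟩
  · rcases eq_or_ne p2 v with h2v | h2v
    · rcases eq_or_ne p1 v with h1v | h1v
      · exact absurd (h1v ▸ h2v ▸ hp) (lt_irrefl _)
      · have h1ltu : p1 < u := by
          rcases lt_or_ge p1 u with h | h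
          · exact h
          · exact absurd ⟨h2v, lt_of_le_of_ne h (Ne.symm h1u), h2v ▸ hp⟩ hB
        rw [h2v, Equiv.swap_apply_right, Equiv.swap_apply_of_ne_of_ne h1u h1v]
        exact ⟨h1ltu, fun h => absurd h.1 h1u, fun h => absurd h.1 (ne_of_lt huv)⟩
    · rcases eq_or_ne p1 v with h1v | h1v
      · have h2u : p2 ≠ u := fun h => absurd (h1v ▸ h ▸ hp) (not_lt.2 (le_of_lt huv))
        have hvp2 : v < p2 := h1v ▸ hp
        rw [h1v, Equiv.swap_apply_right, Equiv.swap_apply_of_ne_of_ne h2u h2v]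
        exact ⟨lt_trans huv hvp2, fun h => absurd h.2.2 (not_le.2 hvp2),
          fun h => absurd h.1 h2v⟩
      · rcases eq_or_ne p2 u with h2u | h2u
        · have h1ltu : p1 < u := h2u ▸ hp
          rw [h2u, Equiv.swap_apply_left, Equiv.swap_apply_of_ne_of_ne h1u h1v]
          exact ⟨lt_trans h1ltu huv, fun h => absurd (h.1 ▸ h1ltu) (lt_irrefl _),
            fun h => absurd h.2.1 (not_lt.2 (le_of_lt h1ltu))⟩
        · rw [Equiv.swap_apply_of_ne_of_ne h1u h1v,
            Equiv.swap_apply_of_ne_of_ne h2u h2v]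
          exact ⟨hp, hA, hB⟩

private lemma len_split (z : Equiv.Perm (Fin n)) (u v : Fin n) :
    len z =
      (Finset.univ.filter (fun p : Fin n × Fin n =>
          (p.1 < p.2 ∧ z p.2 < z p.1) ∧ (p.1 = u ∧ u < p.2 ∧ p.2 ≤ v))).card +
      (Finset.univ.filter (fun p : Fin n × Fin n =>
          (p.1 < p.2 ∧ z p.2 < z p.1) ∧ ¬(p.1 = u ∧ u < p.2 ∧ p.2 ≤ v) ∧
          (p.2 = v ∧ u < p.1 ∧ p.1 < v))).card +
      (Finset.univ.filter (fun p : Fin n × Fin n =>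
          (p.1 < p.2 ∧ z p.2 < z p.1) ∧ ¬(p.1 = u ∧ u < p.2 ∧ p.2 ≤ v) ∧
          ¬(p.2 = v ∧ u < p.1 ∧ p.1 < v))).card := by
  have h1 := Finset.card_filter_add_card_filter_not
    (s := Finset.univ.filter (fun p : Fin n × Fin n => p.1 < p.2 ∧ z p.2 < z p.1))
    (p := fun p : Fin n × Fin n => p.1 = u ∧ u < p.2 ∧ p.2 ≤ v)
  have h2 := Finset.card_filter_add_card_filter_not
    (s := Finset.univ.filter (fun p : Fin n × Fin n =>
      (p.1 < p.2 ∧ z p.2 < z p.1) ∧ ¬(p.1 = u ∧ u < p.2 ∧ p.2 ≤ v)))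
    (p := fun p : Fin n × Fin n => p.2 = v ∧ u < p.1 ∧ p.1 < v)
  rw [Finset.filter_filter, Finset.filter_filter] at h1 h2
  simp only [and_assoc] at h1 h2 ⊢
  rw [len]
  omega

end LenSwap

section LenSwap2

variable {n : ℕ}

private lemma cardA_eq (z : Equiv.Perm (Fin n)) (u v : Fin n) :
    (Finset.univ.filter (fun p : Fin n × Fin n =>
        (p.1 < p.2 ∧ z p.2 < z p.1) ∧ (p.1 = u ∧ u < p.2 ∧ p.2 ≤ v))).card =
    ((Finset.Ioc u v).filter (fun c => z c < z u)).card := by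
  apply Finset.card_bij (fun p _ => p.2)
  · intro p hp
    simp only [Finset.mem_filter, Finset.mem_univ, true_and] at hp
    simp only [Finset.mem_filter, Finset.mem_Ioc]
    exact ⟨⟨hp.2.2.1, hp.2.2.2⟩, hp.2.1 ▸ hp.1.2⟩
  · intro p hp q hq hpq
    simp only [Finset.mem_filter, Finset.mem_univ, true_and] at hp hq
    exact Prod.ext (hp.2.1.trans hq.2.1.symm) hpq
  · intro c hc
    simp only [Finset.mem_filter, Finset.mem_Ioc] at hc
    exact ⟨(u, c), Finset.mem_filter.mpr
      ⟨Finset.mem_univ _, ⟨hc.1.1, hc.2⟩, rfl, hc.1.1, hc.1.2⟩, rfl⟩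

private lemma cardB_eq (z : Equiv.Perm (Fin n)) (u v : Fin n) (huv : u < v) :
    (Finset.univ.filter (fun p : Fin n × Fin n =>
        (p.1 < p.2 ∧ z p.2 < z p.1) ∧ ¬(p.1 = u ∧ u < p.2 ∧ p.2 ≤ v) ∧
        (p.2 = v ∧ u < p.1 ∧ p.1 < v))).card =
    ((Finset.Ioo u v).filter (fun c => z v < z c)).card := by
  apply Finset.card_bij (fun p _ => p.1)
  · intro p hp
    simp only [Finset.mem_filter, Finset.mem_univ, true_and] at hp
    simp only [Finset.mem_filter, Finset.mem_Ioo]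
    exact ⟨⟨hp.2.2.2.1, hp.2.2.2.2⟩, hp.2.2.1 ▸ hp.1.2⟩
  · intro p hp q hq hpq
    simp only [Finset.mem_filter, Finset.mem_univ, true_and] at hp hq
    exact Prod.ext hpq (hp.2.2.1.trans hq.2.2.1.symm)
  · intro c hc
    simp only [Finset.mem_filter, Finset.mem_Ioo] at hc
    exact ⟨(c, v), Finset.mem_filter.mpr ⟨Finset.mem_univ _, ⟨hc.1.2, hc.2⟩,
      fun h => absurd h.1 (ne_of_gt hc.1.1), rfl, hc.1.1, hc.1.2⟩, rfl⟩

private lemma cardNF_eq (x : Equiv.Perm (Fin n)) (u v : Fin n) (huv : u < v) :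
    (Finset.univ.filter (fun p : Fin n × Fin n =>
        (p.1 < p.2 ∧ (x * Equiv.swap u v) p.2 < (x * Equiv.swap u v) p.1) ∧
        ¬(p.1 = u ∧ u < p.2 ∧ p.2 ≤ v) ∧ ¬(p.2 = v ∧ u < p.1 ∧ p.1 < v))).card =
    (Finset.univ.filter (fun p : Fin n × Fin n =>
        (p.1 < p.2 ∧ x p.2 < x p.1) ∧
        ¬(p.1 = u ∧ u < p.2 ∧ p.2 ≤ v) ∧ ¬(p.2 = v ∧ u < p.1 ∧ p.1 < v))).card := by
  apply Finset.card_bij (fun p _ => (Equiv.swap u v p.1, Equiv.swap u v p.2))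
  · intro p hp
    simp only [Finset.mem_filter, Finset.mem_univ, true_and] at hp
    simp only [Equiv.Perm.mul_apply] at hp
    have := flip_region_mem u v huv p.1 p.2 hp.1.1 hp.2.1 hp.2.2
    simp only [Finset.mem_filter, Finset.mem_univ, true_and]
    exact ⟨⟨this.1, hp.1.2⟩, this.2.1, this.2.2⟩
  · intro p hp q hq hpq
    simp only [Prod.mk.injEq] at hpq
    have h1 := (Equiv.swap u v).injective hpq.1
    have h2 := (Equiv.swap u v).injective hpq.2
    exact Prod.ext h1 h2
  · intro p hp
    simp only [Finset.mem_filter, Finset.mem_univ, true_and] at hp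
    refine ⟨(Equiv.swap u v p.1, Equiv.swap u v p.2), ?_, ?_⟩
    · have := flip_region_mem u v huv p.1 p.2 hp.1.1 hp.2.1 hp.2.2
      simp only [Finset.mem_filter, Finset.mem_univ, true_and]
      simp only [Equiv.Perm.mul_apply, Equiv.swap_apply_self]
      exact ⟨⟨this.1, hp.1.2⟩, this.2.1, this.2.2⟩
    · simp [Equiv.swap_apply_self]

end LenSwap2

section LenSwap3

variable {n : ℕ}

private lemma len_decomp (x : Equiv.Perm (Fin n)) (u v : Fin n) (huv : u < v)
    (hx : x u < x v) :
    len (x * Equiv.swap u v) =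
      1 + ((Finset.Ioo u v).filter (fun c => x c < x v)).card +
      ((Finset.Ioo u v).filter (fun c => x u < x c)).card +
      (Finset.univ.filter (fun p : Fin n × Fin n =>
        (p.1 < p.2 ∧ x p.2 < x p.1) ∧
        ¬(p.1 = u ∧ u < p.2 ∧ p.2 ≤ v) ∧ ¬(p.2 = v ∧ u < p.1 ∧ p.1 < v))).card := by
  set y := x * Equiv.swap u v with hy
  have hyu : y u = x v := by rw [hy]; simp
  have hyv : y v = x u := by rw [hy]; simp
  have hyc : ∀ c, c ≠ u → c ≠ v → y c = x c := by
    intro c h1 h2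
    rw [hy, Equiv.Perm.mul_apply, Equiv.swap_apply_of_ne_of_ne h1 h2]
  rw [len_split y u v, cardA_eq y u v, cardB_eq y u v huv, cardNF_eq x u v huv]
  congr 2
  · -- Ioc filter for y = 1 + Ioo filter for x
    rw [← Finset.Ioo_insert_right huv, Finset.filter_insert]
    rw [if_pos (by rw [hyv, hyu]; exact hx)]
    rw [Finset.card_insert_of_notMem (by simp [Finset.mem_filter])]
    rw [add_comm]
    congr 1
    apply congrArg Finset.card
    apply Finset.filter_congr
    intro c hc
    simp only [Finset.mem_Ioo] at hc
    rw [hyc c (ne_of_gt hc.1) (ne_of_lt hc.2), hyu]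
  · apply congrArg Finset.card
    apply Finset.filter_congr
    intro c hc
    simp only [Finset.mem_Ioo] at hc
    rw [hyc c (ne_of_gt hc.1) (ne_of_lt hc.2), hyv]

private lemma len_decomp_x (x : Equiv.Perm (Fin n)) (u v : Fin n) (huv : u < v)
    (hx : x u < x v) :
    len x =
      ((Finset.Ioo u v).filter (fun c => x c < x u)).card +
      ((Finset.Ioo u v).filter (fun c => x v < x c)).card +
      (Finset.univ.filter (fun p : Fin n × Fin n =>
        (p.1 < p.2 ∧ x p.2 < x p.1) ∧
        ¬(p.1 = u ∧ u < p.2 ∧ p.2 ≤ v) ∧ ¬(p.2 = v ∧ u < p.1 ∧ p.1 < v))).card := by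
  rw [len_split x u v, cardA_eq x u v, cardB_eq x u v huv]
  congr 2
  rw [← Finset.Ioo_insert_right huv, Finset.filter_insert]
  rw [if_neg (by simp; exact le_of_lt hx)]

lemma len_mul_swap_ge (x : Equiv.Perm (Fin n)) (u v : Fin n) (huv : u < v)
    (hx : x u < x v) : len x + 1 ≤ len (x * Equiv.swap u v) := by
  rw [len_decomp x u v huv hx, len_decomp_x x u v huv hx]
  have h1 : ((Finset.Ioo u v).filter (fun c => x c < x u)).card ≤
      ((Finset.Ioo u v).filter (fun c => x c < x v)).card :=
    Finset.card_le_card (fun c hc => by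
      simp only [Finset.mem_filter] at hc ⊢; exact ⟨hc.1, lt_trans hc.2 hx⟩)
  have h2 : ((Finset.Ioo u v).filter (fun c => x v < x c)).card ≤
      ((Finset.Ioo u v).filter (fun c => x u < x c)).card :=
    Finset.card_le_card (fun c hc => by
      simp only [Finset.mem_filter] at hc ⊢; exact ⟨hc.1, lt_trans hx hc.2⟩)
  omega

lemma len_mul_swap_eq (x : Equiv.Perm (Fin n)) (u v : Fin n) (huv : u < v)
    (hx : x u < x v)
    (hno : ∀ c : Fin n, u < c → c < v → ¬(x u < x c ∧ x c < x v)) :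
    len (x * Equiv.swap u v) = len x + 1 := by
  rw [len_decomp x u v huv hx, len_decomp_x x u v huv hx]
  have e1 : (Finset.Ioo u v).filter (fun c => x c < x v) =
      (Finset.Ioo u v).filter (fun c => x c < x u) := by
    apply Finset.filter_congr
    intro c hc
    simp only [Finset.mem_Ioo] at hc
    constructor
    · intro h
      rcases lt_or_ge (x c) (x u) with h' | h'
      · exact h'
      · have hne : x c ≠ x u := fun he => (ne_of_gt hc.1) (x.injective he)
        exact absurd ⟨lt_of_le_of_ne h' (Ne.symm hne), h⟩ (hno c hc.1 hc.2)
    · intro h; exact lt_trans h hx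
  have e2 : (Finset.Ioo u v).filter (fun c => x u < x c) =
      (Finset.Ioo u v).filter (fun c => x v < x c) := by
    apply Finset.filter_congr
    intro c hc
    simp only [Finset.mem_Ioo] at hc
    constructor
    · intro h
      rcases lt_or_ge (x v) (x c) with h' | h'
      · exact h'
      · have hne : x c ≠ x v := fun he => (ne_of_lt hc.2) (x.injective he)
        exact absurd ⟨h, lt_of_le_of_ne h' hne⟩ (hno c hc.1 hc.2)
    · intro h; exact lt_trans hx h
  rw [e1, e2]
  omega

end LenSwap3

section RkLemmas

variable {n : ℕ}

lemma rk_mul_swap_le (x : Equiv.Perm (Fin n)) (u v : Fin n) (huv : u < v)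
    (hx : x u < x v) (a b : ℕ) : rk (x * Equiv.swap u v) a b ≤ rk x a b := by
  set y := x * Equiv.swap u v with hy
  have hyu : y u = x v := by rw [hy]; simp
  have hyv : y v = x u := by rw [hy]; simp
  have hyc : ∀ c : Fin n, c ≠ u → c ≠ v → y c = x c := by
    intro c h1 h2
    rw [hy, Equiv.Perm.mul_apply, Equiv.swap_apply_of_ne_of_ne h1 h2]
  rw [rk, rk]
  apply Finset.card_le_card_of_injOn
    (fun m => if m = v ∧ b ≤ (x v : ℕ) then u else m)
  · intro m hm
    simp only [Finset.mem_coe, Finset.mem_filter, Finset.mem_univ, true_and] at hm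
    by_cases hc : m = v ∧ b ≤ (x v : ℕ)
    · simp only [if_pos hc]
      simp only [Finset.mem_coe, Finset.mem_filter, Finset.mem_univ, true_and]
      have h1 : (m : ℕ) < a := hm.1
      have h2 : (u : ℕ) < (v : ℕ) := huv
      have h3 : (y m : ℕ) < b := hm.2
      rw [hc.1] at h1 h3
      rw [hyv] at h3
      exact ⟨by omega, h3⟩
    · simp only [if_neg hc]
      simp only [Finset.mem_coe, Finset.mem_filter, Finset.mem_univ, true_and]
      refine ⟨hm.1, ?_⟩
      rcases eq_or_ne m v with hv | hv
      · have hb : ¬ b ≤ (x v : ℕ) := fun h => hc ⟨hv, h⟩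
        rw [hv]
        omega
      · rcases eq_or_ne m u with hu | hu
        · have h3 : (y m : ℕ) < b := hm.2
          rw [hu, hyu] at h3
          have h4 : (x u : ℕ) < (x v : ℕ) := hx
          rw [hu]
          omega
        · have := hyc m hu hv
          rw [← this]; exact hm.2
  · intro m1 h1 m2 h2 he
    simp only [Finset.coe_filter, Set.mem_setOf_eq, Finset.mem_univ, true_and] at h1 h2
    simp only at he
    by_cases hc1 : m1 = v ∧ b ≤ (x v : ℕ) <;> by_cases hc2 : m2 = v ∧ b ≤ (x v : ℕ)
    · rw [hc1.1, hc2.1]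
    · rw [if_pos hc1, if_neg hc2] at he
      -- he : u = m2; m2 ≠ v; then m2 = u so y m2 = x v < b, but hc1.2 : b ≤ x v
      exfalso
      rcases eq_or_ne m2 v with hv | hv
      · exact hc2 ⟨hv, hc1.2⟩
      · have hm2u : m2 = u := he.symm
        have : (y m2 : ℕ) < b := h2.2
        rw [hm2u, hyu] at this
        omega
    · rw [if_neg hc1, if_pos hc2] at he
      exfalso
      rcases eq_or_ne m1 v with hv | hv
      · exact hc1 ⟨hv, hc2.2⟩
      · have hm1u : m1 = u := he
        have : (y m1 : ℕ) < b := h1.2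
        rw [hm1u, hyu] at this
        omega
    · rw [if_neg hc1, if_neg hc2] at he
      exact he

end RkLemmas

section BruhatRk

variable {n : ℕ}

lemma cover_rk_le {x y : Equiv.Perm (Fin n)}
    (h : (∃ t : Equiv.Perm (Fin n), t.IsSwap ∧ y = x * t) ∧ len y = len x + 1)
    (a b : ℕ) : rk y a b ≤ rk x a b := by
  obtain ⟨⟨t, ⟨u, v, huv, ht⟩, rfl⟩, hlen⟩ := h
  subst ht
  rcases lt_trichotomy u v with hlt | heq | hgt
  · rcases lt_or_gt_of_ne (fun he : x u = x v => huv (x.injective he)) with hx | hx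
    · exact rk_mul_swap_le x u v hlt hx a b
    · exfalso
      set y := x * Equiv.swap u v with hy
      have hyu : y u = x v := by rw [hy]; simp
      have hyv : y v = x u := by rw [hy]; simp
      have h5 : len y + 1 ≤ len (y * Equiv.swap u v) := by
        apply len_mul_swap_ge y u v hlt
        rw [hyu, hyv]; exact hx
      have h6 : y * Equiv.swap u v = x := by
        rw [hy, mul_assoc, Equiv.swap_mul_self, mul_one]
      rw [h6] at h5
      omega
  · exact absurd heq huv
  · rw [Equiv.swap_comm]
    rcases lt_or_gt_of_ne (fun he : x v = x u => huv (x.injective he).symm) with hx | hx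
    · exact rk_mul_swap_le x v u hgt hx a b
    · exfalso
      set y := x * Equiv.swap u v with hy
      have hyu : y u = x v := by rw [hy]; simp
      have hyv : y v = x u := by rw [hy]; simp
      have h5 : len y + 1 ≤ len (y * Equiv.swap v u) := by
        apply len_mul_swap_ge y v u hgt
        rw [hyv, hyu]; exact hx
      have h6 : y * Equiv.swap v u = x := by
        rw [Equiv.swap_comm v u, hy, mul_assoc, Equiv.swap_mul_self, mul_one]
      rw [h6] at h5
      omega

lemma bruhatLE_rk_le {x y : Equiv.Perm (Fin n)} (h : bruhatLE x y) (a b : ℕ) :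
    rk y a b ≤ rk x a b := by
  induction h with
  | refl => exact le_refl _
  | tail hs hcov ih => exact le_trans (cover_rk_le hcov a b) ih

end BruhatRk

section TposLemmas

variable {n : ℕ}

lemma tpos_eq_swap {p q : ℕ} (hp1 : 1 ≤ p) (hpn : p ≤ n) (hq1 : 1 ≤ q) (hqn : q ≤ n) :
    tpos n p q = Equiv.swap ⟨p - 1, by omega⟩ ⟨q - 1, by omega⟩ := by
  rw [tpos, dif_pos ⟨hp1, hpn, hq1, hqn⟩]

lemma tpos_isSwap {p q : ℕ} (hp1 : 1 ≤ p) (hpn : p ≤ n) (hq1 : 1 ≤ q) (hqn : q ≤ n)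
    (hne : p ≠ q) : (tpos n p q).IsSwap := by
  rw [tpos_eq_swap hp1 hpn hq1 hqn]
  refine ⟨⟨p - 1, by omega⟩, ⟨q - 1, by omega⟩, ?_, rfl⟩
  simp only [ne_eq, Fin.mk.injEq]
  omega

lemma act_tpos {p q : ℕ} (hp1 : 1 ≤ p) (hpn : p ≤ n) (hq1 : 1 ≤ q) (hqn : q ≤ n)
    (x : ℕ) : act (tpos n p q) x = if x = p then q else if x = q then p else x := by
  rw [tpos_eq_swap hp1 hpn hq1 hqn]
  by_cases hx : 1 ≤ x ∧ x ≤ n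
  · rw [act_def_in _ hx.1 hx.2]
    by_cases hxp : x = p
    · rw [if_pos hxp]
      have e1 : (⟨x - 1, by omega⟩ : Fin n) = ⟨p - 1, by omega⟩ :=
        Fin.ext (by simp only; omega)
      rw [e1, Equiv.swap_apply_left]
      show (q - 1) + 1 = q
      omega
    · rw [if_neg hxp]
      by_cases hxq : x = q
      · rw [if_pos hxq]
        have e1 : (⟨x - 1, by omega⟩ : Fin n) = ⟨q - 1, by omega⟩ :=
          Fin.ext (by simp only; omega)
        rw [e1, Equiv.swap_apply_right]
        show (p - 1) + 1 = p
        omega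
      · rw [if_neg hxq]
        rw [Equiv.swap_apply_of_ne_of_ne (by simp only [ne_eq, Fin.mk.injEq]; omega)
          (by simp only [ne_eq, Fin.mk.injEq]; omega)]
        show (x - 1) + 1 = x
        omega
  · rw [act_def_out _ hx, if_neg (by omega), if_neg (by omega)]

lemma act_mul_tpos_left (v : Equiv.Perm (Fin n)) {p q : ℕ}
    (hp1 : 1 ≤ p) (hpn : p ≤ n) (hq1 : 1 ≤ q) (hqn : q ≤ n) :
    act (v * tpos n p q) p = act v q := by
  rw [act_mul, act_tpos hp1 hpn hq1 hqn, if_pos rfl]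

lemma act_mul_tpos_right (v : Equiv.Perm (Fin n)) {p q : ℕ}
    (hp1 : 1 ≤ p) (hpn : p ≤ n) (hq1 : 1 ≤ q) (hqn : q ≤ n) (hne : q ≠ p) :
    act (v * tpos n p q) q = act v p := by
  rw [act_mul, act_tpos hp1 hpn hq1 hqn, if_neg hne, if_pos rfl]

lemma act_mul_tpos_other (v : Equiv.Perm (Fin n)) {p q x : ℕ}
    (hp1 : 1 ≤ p) (hpn : p ≤ n) (hq1 : 1 ≤ q) (hqn : q ≤ n)
    (hxp : x ≠ p) (hxq : x ≠ q) :
    act (v * tpos n p q) x = act v x := by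
  rw [act_mul, act_tpos hp1 hpn hq1 hqn, if_neg hxp, if_neg hxq]

lemma len_mul_tpos (x : Equiv.Perm (Fin n)) {p q : ℕ}
    (hp1 : 1 ≤ p) (hpq : p < q) (hqn : q ≤ n)
    (hval : act x p < act x q)
    (hno : ∀ c, p < c → c < q → ¬(act x p < act x c ∧ act x c < act x q)) :
    len (x * tpos n p q) = len x + 1 := by
  have hq1 : 1 ≤ q := by omega
  have hpn : p ≤ n := by omega
  rw [tpos_eq_swap hp1 hpn hq1 hqn]
  have huv : (⟨p - 1, by omega⟩ : Fin n) < ⟨q - 1, by omega⟩ := by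
    simp only [Fin.mk_lt_mk]; omega
  apply len_mul_swap_eq x _ _ huv
  · rw [act_def_in x hp1 hpn, act_def_in x hq1 hqn] at hval
    exact Fin.lt_def.mpr (by omega)
  · intro c hc1 hc2
    rw [Fin.lt_def] at hc1 hc2
    simp only [Fin.val_mk] at hc1 hc2
    have hcn := c.isLt
    have h1 : 1 ≤ (c : ℕ) + 1 := by omega
    have h2 : (c : ℕ) + 1 ≤ n := by omega
    have := hno ((c : ℕ) + 1) (by omega) (by omega)
    rw [act_def_in x h1 h2, act_def_in x hp1 hpn, act_def_in x hq1 hqn] at this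
    have hcc : (⟨(c : ℕ) + 1 - 1, by omega⟩ : Fin n) = c := Fin.ext (by simp)
    rw [hcc] at this
    intro hcon
    apply this
    rw [Fin.lt_def, Fin.lt_def] at hcon
    omega

lemma rk_mul_tpos_le (x : Equiv.Perm (Fin n)) {p q : ℕ}
    (hp1 : 1 ≤ p) (hpq : p < q) (hqn : q ≤ n)
    (hval : act x p < act x q) (a b : ℕ) :
    rk (x * tpos n p q) a b ≤ rk x a b := by
  have hq1 : 1 ≤ q := by omega
  have hpn : p ≤ n := by omega
  rw [tpos_eq_swap hp1 hpn hq1 hqn]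
  apply rk_mul_swap_le x _ _ (by simp only [Fin.mk_lt_mk]; omega)
  rw [act_def_in x hp1 hpn, act_def_in x hq1 hqn] at hval
  exact Fin.lt_def.mpr (by omega)

end TposLemmas

section FoldLemmas

variable {n : ℕ}

lemma foldl_act_other (i : ℕ) (hi : 1 ≤ i) (hin : i ≤ n) (L : List ℕ)
    (hL : ∀ a ∈ L, 1 ≤ a ∧ a ≤ n) (x : ℕ) (hxi : x ≠ i) (hxL : ∀ a ∈ L, x ≠ a)
    (w : Equiv.Perm (Fin n)) :
    act (L.foldl (fun v j => v * tpos n i j) w) x = act w x := by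
  induction L generalizing w with
  | nil => rfl
  | cons a T ih =>
    rw [List.foldl_cons]
    rw [ih (fun b hb => hL b (List.mem_cons_of_mem a hb))
      (fun b hb => hxL b (List.mem_cons_of_mem a hb))]
    exact act_mul_tpos_other w hi hin (hL a (List.mem_cons_self)).1
      (hL a (List.mem_cons_self)).2 hxi (hxL a (List.mem_cons_self))

lemma foldl_act_i (i : ℕ) (hi : 1 ≤ i) (hin : i ≤ n) (L : List ℕ)
    (hL : ∀ a ∈ L, i < a ∧ a ≤ n) (hpair : L.Pairwise (· > ·)) (hne : L ≠ [])
    (w : Equiv.Perm (Fin n)) :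
    act (L.foldl (fun v j => v * tpos n i j) w) i = act w (L.getLast hne) := by
  induction L generalizing w with
  | nil => exact absurd rfl hne
  | cons a T ih =>
    rw [List.foldl_cons]
    have ha := hL a (List.mem_cons_self)
    rcases eq_or_ne T [] with hT | hT
    · subst hT
      simp only [List.foldl_nil, List.getLast_singleton]
      exact act_mul_tpos_left w hi hin (by omega) ha.2
    · rw [List.getLast_cons hT]
      rw [ih (fun b hb => hL b (List.mem_cons_of_mem a hb)) (List.Pairwise.of_cons hpair) hT]
      have hlast : T.getLast hT ∈ T := List.getLast_mem hT
      have h1 : T.getLast hT ≠ i := by have := hL _ (List.mem_cons_of_mem a hlast); omega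
      have h2 : T.getLast hT ≠ a := by
        have := (List.pairwise_cons.mp hpair).1 _ hlast
        omega
      exact act_mul_tpos_other w hi hin (by omega) ha.2 h1 h2

lemma tpos_comm {i a : ℕ} (hi : 1 ≤ i) (hin : i + 1 ≤ n) (ha : i + 1 < a) (han : a ≤ n) :
    tpos n i a * tpos n i (i+1) = tpos n i (i+1) * tpos n (i+1) a := by
  rw [tpos_eq_swap (by omega : 1 ≤ i) (by omega : i ≤ n) (by omega : 1 ≤ a) han,
    tpos_eq_swap (by omega : 1 ≤ i) (by omega : i ≤ n) (by omega : 1 ≤ i+1) hin,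
    tpos_eq_swap (by omega : 1 ≤ i+1) hin (by omega : 1 ≤ a) han]
  apply Equiv.ext
  intro z
  simp only [Equiv.Perm.mul_apply, Equiv.swap_apply_def]
  split_ifs <;> first
    | rfl
    | (simp only [Fin.ext_iff, Fin.val_mk, not_true, false_implies] at *; omega)
    | (exfalso; omega)

lemma foldl_shift (i : ℕ) (hi : 1 ≤ i) (hin : i + 1 ≤ n) (L : List ℕ)
    (hL : ∀ a ∈ L, i + 1 < a ∧ a ≤ n) (w : Equiv.Perm (Fin n)) :
    (L.foldl (fun v j => v * tpos n i j) w) * tpos n i (i+1)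
      = L.foldl (fun v j => v * tpos n (i+1) j) (w * tpos n i (i+1)) := by
  induction L generalizing w with
  | nil => rfl
  | cons a T ih =>
    rw [List.foldl_cons, List.foldl_cons,
      ih (fun b hb => hL b (List.mem_cons_of_mem a hb))]
    congr 1
    rw [mul_assoc, mul_assoc,
      tpos_comm hi hin (hL a (List.mem_cons_self)).1 (hL a (List.mem_cons_self)).2]

lemma chain_bruhat (w : Equiv.Perm (Fin n)) (i : ℕ) (hi1 : 1 ≤ i) (hin : i + 1 ≤ n)
    (L : List ℕ) (hpair : L.Pairwise (· > ·))
    (hmem : ∀ a ∈ L, i + 1 < a ∧ a ≤ n ∧ act w i < act w a ∧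
      (∀ c, i < c → c < a → act w i < act w c → act w c < act w a → False))
    (hvals : L.Pairwise (fun a b => act w a < act w b)) :
    ∀ x : Equiv.Perm (Fin n),
    (∀ c, i + 1 < c → (∀ a ∈ L, c ≠ a) → (∃ a ∈ L, c < a) → act x c = act w c) →
    (∀ a ∈ L, act x a = act w a) →
    (∀ a ∈ L, act x (i+1) < act w a) →
    act w i ≤ act x (i+1) →
    bruhatLE x (L.foldl (fun v j => v * tpos n (i+1) j) x) := by
  induction L with
  | nil => intro x _ _ _ _; exact Relation.ReflTransGen.refl
  | cons a T ih =>
    intro x H1 H2 H3 H4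
    have haT := hmem a (List.mem_cons_self)
    obtain ⟨ha1, ha2, ha3, ha4⟩ := haT
    have hxa : act x a = act w a := H2 a (List.mem_cons_self)
    have hx1a : act x (i+1) < act x a := by rw [hxa]; exact H3 a (List.mem_cons_self)
    have hcons := List.pairwise_cons.mp hpair
    have hconsv := List.pairwise_cons.mp hvals
    -- the covering step
    have hlen : len (x * tpos n (i+1) a) = len x + 1 := by
      apply len_mul_tpos x (by omega) ha1 ha2 hx1a
      intro c hc1 hc2 hcon
      have hcw : act x c = act w c := by
        by_cases hcT : c ∈ T
        · exact H2 c (List.mem_cons_of_mem a hcT)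
        · apply H1 c (by omega)
          · intro b hb
            rcases List.mem_cons.mp hb with rfl | hbT
            · omega
            · intro he; exact hcT (he ▸ hbT)
          · exact ⟨a, List.mem_cons_self, hc2⟩
      rw [hcw, hxa] at hcon
      exact ha4 c (by omega) hc2 (lt_of_le_of_lt H4 hcon.1) hcon.2
    have hstep : bruhatLE x (x * tpos n (i+1) a) :=
      Relation.ReflTransGen.single
        ⟨⟨tpos n (i+1) a, tpos_isSwap (by omega) hin (by omega) ha2 (by omega), rfl⟩, hlen⟩
    rw [List.foldl_cons]
    refine Relation.ReflTransGen.trans hstep ?_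
    set y := x * tpos n (i+1) a with hy
    apply ih hcons.2 (fun b hb => hmem b (List.mem_cons_of_mem a hb)) hconsv.2
    · -- H1 for y
      intro c hc1 hc2 hc3
      obtain ⟨b, hbT, hcb⟩ := hc3
      have hba : b < a := hcons.1 b hbT
      have hca : c ≠ a := by omega
      rw [hy, act_mul_tpos_other x (by omega) hin (by omega) ha2 (by omega) hca]
      apply H1 c hc1
      · intro b' hb'
        rcases List.mem_cons.mp hb' with rfl | hb'T
        · exact hca
        · exact hc2 b' hb'T
      · exact ⟨a, List.mem_cons_self, by omega⟩
    · -- H2 for y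
      intro b hbT
      have hba : b < a := hcons.1 b hbT
      have hbmem := hmem b (List.mem_cons_of_mem a hbT)
      rw [hy, act_mul_tpos_other x (by omega) hin (by omega) ha2 (by omega : b ≠ i+1)
        (by omega : b ≠ a)]
      exact H2 b (List.mem_cons_of_mem a hbT)
    · -- H3 for y
      intro b hbT
      rw [hy, act_mul_tpos_left x (by omega) hin (by omega) ha2, hxa]
      exact hconsv.1 b hbT
    · -- H4 for y
      rw [hy, act_mul_tpos_left x (by omega) hin (by omega) ha2, hxa]
      exact le_of_lt ha3

end FoldLemmas

section AlphaLemmas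

variable {n : ℕ} {w : Equiv.Perm (Fin n)} {i j : ℕ}

lemma act_act_inv (w : Equiv.Perm (Fin n)) {b : ℕ} (h1 : 1 ≤ b) (h2 : b ≤ n) :
    act w (act w⁻¹ b) = b := by
  have := act_inv_act w⁻¹ h1 h2
  rwa [inv_inv] at this

namespace AlphaFacts

lemma bounds (h : alphaCell w i j) : 1 ≤ i ∧ 1 ≤ j ∧ i + j ≤ n :=
  ⟨h.1.1, h.1.2.1, h.2.1⟩

lemma L1 (h : alphaCell w i j) : ∀ a, 1 ≤ a → a < i → j < act w a := by
  intro a h1 h2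
  have hdom := h.1.2.2.2.1 (by omega)
  have := hdom.2.2 (a, j) h1 h.1.2.1 (by simp; omega) (by simp)
  exact this.2.2.1

lemma L2 (h : alphaCell w i j) : ∀ b, 1 ≤ b → b < j → i < act w⁻¹ b := by
  intro b h1 h2
  have hdom := h.1.2.2.2.2 (by omega)
  have := hdom.2.2 (i, b) h.1.1 h1 (by simp) (by simp; omega)
  exact this.2.2.2

lemma F0 (h : alphaCell w i j) : act w i = j := by
  have hb := bounds h
  have hjn : j ≤ n := by omega
  have hin : i ≤ n := by omega
  have hrd : (i, j) ∉ rd w := by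
    intro hmem
    apply h.1.2.2.1
    refine ⟨h.1.1, h.1.2.1, ?_⟩
    intro q hq1 hq2 hqi hqj
    rcases lt_or_eq_of_le hqi with hlt | heq
    · exact (h.1.2.2.2.1 (by omega)).2.2 q hq1 hq2 (by simp; omega) (by simpa)
    · rcases lt_or_eq_of_le hqj with hlt2 | heq2
      · exact (h.1.2.2.2.2 (by omega)).2.2 q hq1 hq2 (by simpa) (by simp; omega)
      · have : q = (i, j) := Prod.ext heq heq2
        rwa [this]
  have hmem := act_mem w h.1.1 hin
  have hmem2 := act_mem w⁻¹ h.1.2.1 hjn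
  have hcase : act w i ≤ j ∨ act w⁻¹ j ≤ i := by
    by_contra hcon
    push_neg at hcon
    exact hrd ⟨h.1.1, h.1.2.1, hcon.1, hcon.2⟩
  rcases hcase with hc | hc
  · rcases eq_or_lt_of_le (h.1.2.1 : 1 ≤ j) with hj1 | hj1
    · omega
    · have hdom := h.1.2.2.2.2 (by omega)
      have := hdom.2.2 (i, j - 1) h.1.1 (by omega) (by simp) (by simp)
      have h2 := this.2.2.1
      simp only at h2
      omega
  · have hwinv : act w⁻¹ j = i := by
      rcases eq_or_lt_of_le (h.1.1 : 1 ≤ i) with hi1 | hi1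
      · omega
      · have hdom := h.1.2.2.2.1 (by omega)
        have := hdom.2.2 (i - 1, j) (by omega) h.1.2.1 (by simp) (by simp)
        have h2 := this.2.2.2
        simp only at h2
        omega
    have := act_act_inv w h.1.2.1 hjn
    rw [hwinv] at this
    exact this

lemma FA (h : alphaCell w i j) : act w i < act w (i + 1) := by
  have hb := bounds h
  have hin : i + 1 ≤ n := by omega
  have hne : act w (i + 1) ≠ act w i := fun he => by
    have := act_inj w he; omega
  rcases lt_or_gt_of_ne hne with hlt | hgt
  · exfalso
    set j' := act w (i + 1) with hj'
    have hF0 := F0 h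
    have hj'mem := act_mem w (by omega : 1 ≤ i + 1) hin
    have hj'j : j' < j := by rw [← hF0]; exact hlt
    have hinv : act w⁻¹ j' = i + 1 := act_inv_act w (by omega) hin
    -- (i+1, j') is an addable cell with (i+1) + j' ≤ n, contradicting minimality of j
    have hadd : addableP w (i + 1) j' := by
      refine ⟨by omega, hj'mem.1, ?_, ?_, ?_⟩
      · intro hdom
        have := hdom.2.2 (i + 1, j') (by omega) hj'mem.1 (by simp) (by simp)
        have h2 := this.2.2.2
        simp only at h2
        rw [hinv] at h2
        omega
      · intro _
        have : i + 1 - 1 = i := by omega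
        rw [this]
        refine ⟨h.1.1, hj'mem.1, ?_⟩
        intro q hq1 hq2 hqi hqj
        simp only at hqi hqj
        refine ⟨hq1, hq2, ?_, ?_⟩
        · rcases lt_or_eq_of_le hqi with hlt2 | heq
          · have := L1 h q.1 hq1 hlt2; omega
          · rw [heq, hF0]; omega
        · rcases lt_or_eq_of_le hqj with hlt2 | heq
          · have := L2 h q.2 hq2 (by omega); omega
          · rw [heq, hinv]; omega
      · intro hj'1
        refine ⟨by omega, by omega, ?_⟩
        intro q hq1 hq2 hqi hqj
        simp only at hqi hqj
        refine ⟨hq1, hq2, ?_, ?_⟩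
        · rcases lt_or_ge q.1 (i + 1) with hlt2 | hle2
          · rcases lt_or_eq_of_le (by omega : q.1 ≤ i) with hlt3 | heq
            · have := L1 h q.1 hq1 hlt3; omega
            · rw [heq, hF0]; omega
          · have : q.1 = i + 1 := by omega
            rw [this, ← hj']; omega
        · have hq2j : q.2 < j := by omega
          have hgti := L2 h q.2 hq2 hq2j
          have hne2 : act w⁻¹ q.2 ≠ i + 1 := by
            intro he
            have : act w (act w⁻¹ q.2) = q.2 := act_act_inv w hq2 (by omega)
            rw [he, ← hj'] at this
            omega
          omega
    have := h.2.2 (i + 1) j' hadd (by omega)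
    omega
  · exact hgt

end AlphaFacts

end AlphaLemmas

section NbrLemmas

variable {n : ℕ} {w : Equiv.Perm (Fin n)} {i j a : ℕ}

lemma act_fin (z : Equiv.Perm (Fin n)) (m : Fin n) :
    act z ((m : ℕ) + 1) = (z m : ℕ) + 1 := by
  have hm := m.isLt
  have e1 : (⟨(m : ℕ) + 1 - 1, by omega⟩ : Fin n) = m := Fin.ext (by simp)
  rw [act_def_in z (by omega) (by omega), e1]

lemma simpleRefl_eq_tpos (hi : 1 ≤ i) (hin : i + 1 ≤ n) :
    simpleRefl n i = tpos n i (i + 1) := by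
  have e1 : (⟨i + 1 - 1, by omega⟩ : Fin n) = ⟨i, by omega⟩ := Fin.ext (by simp)
  rw [simpleRefl, dif_pos ⟨hi, by omega⟩,
    tpos_eq_swap hi (by omega) (by omega) hin, e1]

namespace NbrFacts

lemma gt_i (hnbr : isNbrP w i a) : i < a := by
  rcases lt_or_eq_of_le hnbr.1 with h | h
  · exact h
  · exact absurd (by rw [← h]) hnbr.2.2.1

lemma val_gt (hnbr : isNbrP w i a) : act w i < act w a := by
  rcases lt_or_eq_of_le hnbr.2.1 with h | h
  · exact h
  · exact absurd (act_inj w h.symm) (by have := gt_i hnbr; omega)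

lemma le_n (h : alphaCell w i j) (hnbr : isNbrP w i a) : a ≤ n := by
  have hb := AlphaFacts.bounds h
  have hFA := AlphaFacts.FA h
  by_contra hcon
  push_neg at hcon
  have h1 : act w (i + 1) ≤ act w a := by
    rw [act_def_out w (show ¬(1 ≤ a ∧ a ≤ n) by omega)]
    have := act_mem w (by omega : 1 ≤ i + 1) (by omega : i + 1 ≤ n)
    omega
  have := hnbr.2.2.2 (i + 1) (by omega) (by omega) (le_of_lt hFA) h1
  omega

lemma rect (hnbr : isNbrP w i a) :
    ∀ c, i < c → c < a → act w i < act w c → act w c < act w a → False := by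
  intro c h1 h2 h3 h4
  have := hnbr.2.2.2 c (by omega) (by omega) (le_of_lt h3) (le_of_lt h4)
  omega

lemma anti {a' : ℕ} (hnbr : isNbrP w i a) (hnbr' : isNbrP w i a') (haa : a < a') :
    act w a' < act w a := by
  have hgt := gt_i hnbr
  by_contra hcon
  push_neg at hcon
  have hne : act w a ≠ act w a' := fun he => by have := act_inj w he; omega
  have := hnbr'.2.2.2 a (by omega) (by omega) hnbr.2.1
    (le_of_lt (lt_of_le_of_ne hcon hne))
  omega

lemma lt_i1 (h : alphaCell w i j) (hnbr : isNbrP w i a) (hne : a ≠ i + 1) :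
    i + 1 < a ∧ act w a < act w (i + 1) := by
  have hgt := gt_i hnbr
  have hFA := AlphaFacts.FA h
  have h1 : i + 1 < a := by omega
  refine ⟨h1, ?_⟩
  by_contra hcon
  push_neg at hcon
  have hne2 : act w (i+1) ≠ act w a := fun he => by have := act_inj w he; omega
  have := hnbr.2.2.2 (i + 1) (by omega) (by omega) (le_of_lt hFA)
    (lt_of_le_of_ne hcon hne2).le
  omega

end NbrFacts

end NbrLemmas

section SortLemmas

variable {n : ℕ}

lemma sort_rev_pairwise (U : Finset ℕ) :
    ((U.sort (· ≤ ·)).reverse).Pairwise (· > ·) := by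
  rw [List.pairwise_reverse]
  exact (U.sortedLT_sort).pairwise

lemma mem_sort_rev (U : Finset ℕ) (a : ℕ) :
    a ∈ (U.sort (· ≤ ·)).reverse ↔ a ∈ U := by
  rw [List.mem_reverse, Finset.mem_sort]

lemma sort_rev_ne_nil {U : Finset ℕ} (hne : U.Nonempty) :
    (U.sort (· ≤ ·)).reverse ≠ [] := by
  intro h
  have h2 : U.sort (· ≤ ·) = [] := by
    have := congrArg List.reverse h
    simpa using this
  have hl := Finset.length_sort (α := ℕ) (· ≤ ·) (s := U)
  rw [h2] at hl
  simp only [List.length_nil] at hl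
  have hc : U.card = 0 := hl.symm
  rw [Finset.card_eq_zero] at hc
  obtain ⟨x, hx⟩ := hne
  rw [hc] at hx
  simp at hx

lemma sort_cons_min {U : Finset ℕ} {m : ℕ} (hm : m ∈ U) (hmin : ∀ a ∈ U, m ≤ a) :
    U.sort (· ≤ ·) = m :: (U.erase m).sort (· ≤ ·) := by
  have h1 : List.Perm (U.sort (· ≤ ·)) U.toList := U.sort_perm_toList (· ≤ ·)
  have h2 : U = insert m (U.erase m) := (Finset.insert_erase hm).symm
  have h3 : List.Perm U.toList (m :: (U.erase m).toList) := by
    conv_lhs => rw [h2]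
    exact Finset.toList_insert (Finset.notMem_erase m U)
  have h4 : List.Perm (U.erase m).toList ((U.erase m).sort (· ≤ ·)) :=
    ((U.erase m).sort_perm_toList (· ≤ ·)).symm
  have hperm : List.Perm (U.sort (· ≤ ·)) (m :: (U.erase m).sort (· ≤ ·)) :=
    h1.trans (h3.trans (List.Perm.cons m h4))
  have hs2 : (m :: (U.erase m).sort (· ≤ ·)).Pairwise (· ≤ ·) := by
    rw [List.pairwise_cons]
    exact ⟨fun b hb => hmin b (Finset.mem_of_mem_erase ((Finset.mem_sort _).mp hb)),
      (U.erase m).pairwise_sort (· ≤ ·)⟩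
  exact List.Perm.eq_of_pairwise' (U.pairwise_sort (· ≤ ·)) hs2 hperm

lemma wUp_decomp (w : Equiv.Perm (Fin n)) (i : ℕ) {U : Finset ℕ} {m : ℕ}
    (hm : m ∈ U) (hmin : ∀ a ∈ U, m ≤ a) :
    wUp w i U = wUp w i (U.erase m) * tpos n i m := by
  rw [wUp, wUp, sort_cons_min hm hmin]
  simp only [List.reverse_cons, List.foldl_append, List.foldl_cons, List.foldl_nil]

lemma rk_lt_at (v z : Equiv.Perm (Fin n)) (i b : ℕ) (hi : 1 ≤ i) (hin : i ≤ n)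
    (hagree : ∀ p, 1 ≤ p → p < i → act v p = act z p)
    (hv : act v i ≤ b) (hz : b < act z i) :
    rk z i b < rk v i b := by
  have hb1 : 1 ≤ b := le_trans (act_mem v hi hin).1 hv
  rw [rk, rk]
  apply Finset.card_lt_card
  rw [Finset.ssubset_iff_of_subset]
  · refine ⟨⟨i - 1, by omega⟩, ?_, ?_⟩
    · simp only [Finset.mem_filter, Finset.mem_univ, true_and]
      constructor
      · show i - 1 < i; omega
      · have := act_fin v ⟨i - 1, by omega⟩
        simp only [Fin.val_mk] at this
        have h2 : i - 1 + 1 = i := by omega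
        rw [h2] at this
        omega
    · simp only [Finset.mem_filter, Finset.mem_univ, true_and, not_and]
      intro _
      have := act_fin z ⟨i - 1, by omega⟩
      simp only [Fin.val_mk] at this
      have h2 : i - 1 + 1 = i := by omega
      rw [h2] at this
      omega
  · intro m hm
    simp only [Finset.mem_filter, Finset.mem_univ, true_and] at hm ⊢
    have hfz := act_fin z m
    have hfv := act_fin v m
    rcases eq_or_ne ((m : ℕ)) (i - 1) with he | hne
    · exfalso
      have h2 : (m : ℕ) + 1 = i := by omega
      rw [h2] at hfz
      omega
    · have hlt : (m : ℕ) + 1 < i := by omega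
      have := hagree ((m : ℕ) + 1) (by omega) hlt
      rw [hfz, hfv] at this
      exact ⟨hm.1, by omega⟩

end SortLemmas

/-- Lemma 5.1(4)-(5): if `w ≠ w₀`, `(i,j)` is an addable cell of `dom(w)` with
`j = α(w)`, and `∅ ≠ U ⊆ φ_i(w)`, then `w_{U,i}` has a descent at `i`
iff `w_{U,i} ≥ w s_i` in Bruhat order, iff `i+1 ∈ U`. -/
theorem wU_descent_iff {n : ℕ} (w : Equiv.Perm (Fin n)) (i j : ℕ) (U : Finset ℕ)
    (hw : w ≠ longest n) (h : alphaCell w i j)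
    (hne : U.Nonempty) (hU : ∀ a ∈ U, isNbrP w i a) :
    ((act (wUp w i U) (i + 1) < act (wUp w i U) i) ↔
        bruhatLE (w * simpleRefl n i) (wUp w i U)) ∧
    ((act (wUp w i U) (i + 1) < act (wUp w i U) i) ↔ (i + 1) ∈ U) := by
  have hi1 : 1 ≤ i := h.1.1
  have hj1 : 1 ≤ j := h.1.2.1
  have hin : i + 1 ≤ n := by have := h.2.1; omega
  have hFA := AlphaFacts.FA h
  have hgt : ∀ a ∈ U, i < a := fun a ha => NbrFacts.gt_i (hU a ha)
  have hlenn : ∀ a ∈ U, a ≤ n := fun a ha => NbrFacts.le_n h (hU a ha)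
  have hval : ∀ a ∈ U, act w i < act w a := fun a ha => NbrFacts.val_gt (hU a ha)
  by_cases hmem : (i + 1) ∈ U
  · -- i+1 ∈ U : descent and Bruhat comparability both hold
    have hmin' : ∀ a ∈ U, i + 1 ≤ a := fun a ha => hgt a ha
    have hdec : wUp w i U = wUp w i (U.erase (i + 1)) * tpos n i (i + 1) :=
      wUp_decomp w i hmem hmin'
    set U' := U.erase (i + 1) with hU'def
    set L' := (U'.sort (· ≤ ·)).reverse with hL'def
    have hwUp' : wUp w i U' = L'.foldl (fun v a => v * tpos n i a) w := by
      rw [wUp, ← hL'def]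
    have hL'U : ∀ a ∈ L', a ∈ U ∧ a ≠ i + 1 := by
      intro a ha
      rw [hL'def, mem_sort_rev] at ha
      exact ⟨Finset.mem_of_mem_erase ha, Finset.ne_of_mem_erase ha⟩
    have hL'facts : ∀ a ∈ L', i + 1 < a ∧ act w a < act w (i + 1) := by
      intro a ha
      exact NbrFacts.lt_i1 h (hU a (hL'U a ha).1) (hL'U a ha).2
    have hL'n : ∀ a ∈ L', a ≤ n := fun a ha => hlenn a (hL'U a ha).1
    have hpair' : L'.Pairwise (· > ·) := sort_rev_pairwise U'
    -- value of w_{U,i} at i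
    have hvi : act (wUp w i U) i = act w (i + 1) := by
      rw [hdec, act_mul_tpos_left _ hi1 (by omega) (by omega) hin, hwUp']
      exact foldl_act_other i hi1 (by omega) L'
        (fun a ha => ⟨by have := (hL'facts a ha).1; omega, hL'n a ha⟩) (i + 1)
        (by omega) (fun a ha => by have := (hL'facts a ha).1; omega) w
    -- value of w_{U,i} at i+1, and the descent
    have hdesc : act (wUp w i U) (i + 1) < act (wUp w i U) i := by
      rw [hvi, hdec, act_mul_tpos_right _ hi1 (by omega) (by omega) hin (by omega),
        hwUp']
      rcases eq_or_ne L' [] with hL0 | hL0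
      · rw [hL0]
        simpa using hFA
      · rw [foldl_act_i i hi1 (by omega) L'
          (fun a ha => ⟨by have := (hL'facts a ha).1; omega, hL'n a ha⟩) hpair' hL0 w]
        have hlmem : L'.getLast hL0 ∈ L' := List.getLast_mem hL0
        exact (hL'facts _ hlmem).2
    -- the Bruhat chain
    have hbru : bruhatLE (w * simpleRefl n i) (wUp w i U) := by
      rw [simpleRefl_eq_tpos hi1 hin, hdec, hwUp',
        foldl_shift i hi1 hin L' (fun a ha => ⟨(hL'facts a ha).1, hL'n a ha⟩) w]
      apply chain_bruhat w i hi1 hin L' hpair'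
      · intro a ha
        exact ⟨(hL'facts a ha).1, hL'n a ha, hval a (hL'U a ha).1,
          NbrFacts.rect (hU a (hL'U a ha).1)⟩
      · apply List.Pairwise.imp_of_mem _ hpair'
        intro a b ha hb hab
        exact NbrFacts.anti (hU b (hL'U b hb).1) (hU a (hL'U a ha).1) hab
      · intro c hc1 hc2 hc3
        exact act_mul_tpos_other w hi1 (by omega) (by omega) hin (by omega) (by omega)
      · intro a ha
        have := (hL'facts a ha).1
        exact act_mul_tpos_other w hi1 (by omega) (by omega) hin (by omega) (by omega)
      · intro a ha
        rw [act_mul_tpos_right w hi1 (by omega) (by omega) hin (by omega)]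
        exact hval a (hL'U a ha).1
      · rw [act_mul_tpos_right w hi1 (by omega) (by omega) hin (by omega)]
    exact ⟨iff_of_true hdesc hbru, iff_of_true hdesc hmem⟩
  · -- i+1 ∉ U : no descent, not Bruhat-above
    set L := (U.sort (· ≤ ·)).reverse with hLdef
    have hwUpL : wUp w i U = L.foldl (fun v a => v * tpos n i a) w := by
      rw [wUp, ← hLdef]
    have hLne : L ≠ [] := sort_rev_ne_nil hne
    have hLU : ∀ a ∈ L, a ∈ U := fun a ha => (mem_sort_rev U a).mp (hLdef ▸ ha)
    have hpair : L.Pairwise (· > ·) := sort_rev_pairwise U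
    have ha0U : L.getLast hLne ∈ U := hLU _ (List.getLast_mem hLne)
    have ha0ne : L.getLast hLne ≠ i + 1 := fun he => hmem (he ▸ ha0U)
    have ha0lt : act w (L.getLast hLne) < act w (i + 1) :=
      (NbrFacts.lt_i1 h (hU _ ha0U) ha0ne).2
    have hvi : act (wUp w i U) i = act w (L.getLast hLne) := by
      rw [hwUpL]
      exact foldl_act_i i hi1 (by omega) L
        (fun a ha => ⟨hgt a (hLU a ha), hlenn a (hLU a ha)⟩) hpair hLne w
    have hvi1 : act (wUp w i U) (i + 1) = act w (i + 1) := by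
      rw [hwUpL]
      exact foldl_act_other i hi1 (by omega) L
        (fun a ha => ⟨by have := hgt a (hLU a ha); omega, hlenn a (hLU a ha)⟩) (i + 1)
        (by omega) (fun a ha => fun he => hmem (he ▸ hLU a ha)) w
    have hnodesc : ¬(act (wUp w i U) (i + 1) < act (wUp w i U) i) := by
      rw [hvi, hvi1]
      omega
    have hnobru : ¬ bruhatLE (w * simpleRefl n i) (wUp w i U) := by
      intro hbr
      have hrk := bruhatLE_rk_le hbr i (act w (L.getLast hLne))
      have hlt : rk (w * simpleRefl n i) i (act w (L.getLast hLne)) <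
          rk (wUp w i U) i (act w (L.getLast hLne)) := by
        apply rk_lt_at _ _ _ _ hi1 (by omega)
        · intro p hp1 hp2
          have e1 : act (wUp w i U) p = act w p := by
            rw [hwUpL]
            exact foldl_act_other i hi1 (by omega) L
              (fun a ha => ⟨by have := hgt a (hLU a ha); omega, hlenn a (hLU a ha)⟩) p
              (by omega) (fun a ha => by have := hgt a (hLU a ha); omega) w
          have e2 : act (w * simpleRefl n i) p = act w p := by
            rw [simpleRefl_eq_tpos hi1 hin]
            exact act_mul_tpos_other w hi1 (by omega) (by omega) hin (by omega) (by omega)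
          rw [e1, e2]
        · rw [hvi]
        · rw [simpleRefl_eq_tpos hi1 hin,
            act_mul_tpos_left w hi1 (by omega) (by omega) hin]
          exact ha0lt
      omega
    exact ⟨iff_of_false hnodesc hnobru, iff_of_false hnodesc hmem⟩
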